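/- arXiv:2312.10752 — 2 statements merged into one kernel-verified Lean document; each statement's English description precedes it below -/
import Mathlib

section
/- With A_i(s) the operators defined by A_i(0) = δ_{i,1}/(1+b) and A_i(s+1) = Σ_{n≥1} J_{i-n} A_n(s) + b(i-1) A_i(s), for all i, j ≥ 1 one has [A_i(1), A_j(2)] = (i-1)·A_{i+j-1}(1), and consequently the antisymmetrized relation [A_i(1), A_j(2)] − [A_j(1), A_i(2)] = (i-j)·A_{i+j-1}(1). -/
open MvPolynomial

variable {K : Type*} [Field K]

/-- The `b`-deformed current `J_i` acting on `K[p_1, p_2, ...]` (with `X n = p_n` for `n ≥ 1`):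
multiplication by `p_{-i}` for `i < 0`, `(1+b)·i·∂/∂p_i` for `i > 0`, and `0` for `i = 0`. -/
noncomputable def Jc (b : K) (i : ℤ) : MvPolynomial ℕ K → MvPolynomial ℕ K :=
  if 0 < i then fun P => ((1 + b) * (i : K)) • pderiv i.toNat P
  else if i < 0 then fun P => X (-i).toNat * P
  else 0

/-- `p_i^* = i·∂/∂p_i`, with the convention `p_n^* = 0` for `n ≤ 0`. -/
noncomputable def pstar (i : ℤ) : MvPolynomial ℕ K → MvPolynomial ℕ K :=
  if 0 < i then fun P => (i : K) • pderiv i.toNat P else 0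

/-- The operators `A_i(s)` : `A_i(0) = δ_{i,1}/(1+b)`,
`A_i(s+1) = Σ_{n ≥ 1} J_{i-n} A_n(s) + b(i-1) A_i(s)` (pointwise, locally finite sums). -/
noncomputable def Aop (b : K) : ℕ → ℕ → MvPolynomial ℕ K → MvPolynomial ℕ K
  | 0, i => fun P => if i = 1 then (1 + b)⁻¹ • P else 0
  | s + 1, i => fun P =>
      (∑ᶠ n : ℕ, if 1 ≤ n then Jc b ((i : ℤ) - n) (Aop b s n P) else 0)
        + (b * ((i : K) - 1)) • Aop b s i P

/-- Commutator of operators (as functions). -/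
noncomputable def commOp (f g : MvPolynomial ℕ K → MvPolynomial ℕ K) : MvPolynomial ℕ K → MvPolynomial ℕ K :=
  fun P => f (g P) - g (f P)

lemma Jc_pos (b : K) {m : ℤ} (h : 0 < m) (P : MvPolynomial ℕ K) :
    Jc b m P = ((1 + b) * (m : K)) • pderiv m.toNat P := by simp [Jc, h]

lemma Jc_neg (b : K) {m : ℤ} (h : m < 0) (P : MvPolynomial ℕ K) :
    Jc b m P = X (-m).toNat * P := by simp [Jc, h, not_lt_of_gt h]

lemma Jc_zero' (b : K) (P : MvPolynomial ℕ K) : Jc b 0 P = 0 := by simp [Jc]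

lemma Jc_map_zero (b : K) (m : ℤ) : Jc b m 0 = 0 := by
  rcases lt_trichotomy m 0 with h | h | h
  · simp [Jc_neg b h]
  · subst h; simp [Jc_zero']
  · simp [Jc_pos b h]

lemma Jc_add (b : K) (m : ℤ) (P Q : MvPolynomial ℕ K) :
    Jc b m (P + Q) = Jc b m P + Jc b m Q := by
  rcases lt_trichotomy m 0 with h | h | h
  · simp [Jc_neg b h, mul_add]
  · subst h; simp [Jc_zero']
  · simp [Jc_pos b h, map_add, smul_add]

lemma Jc_smul (b : K) (m : ℤ) (c : K) (P : MvPolynomial ℕ K) :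
    Jc b m (c • P) = c • Jc b m P := by
  rcases lt_trichotomy m 0 with h | h | h
  · simp [Jc_neg b h, mul_smul_comm]
  · subst h; simp [Jc_zero']
  · rw [Jc_pos b h, Jc_pos b h, Derivation.map_smul, smul_comm]

lemma pderiv_comm' {K : Type*} [CommSemiring K] (a c : ℕ) (P : MvPolynomial ℕ K) :
    pderiv a (pderiv c P) = pderiv c (pderiv a P) := by
  induction P using MvPolynomial.induction_on' with
  | monomial s r =>
    rcases eq_or_ne a c with rfl | hac
    · rfl
    · simp only [pderiv_monomial]
      rw [Finsupp.tsub_apply, Finsupp.tsub_apply, Finsupp.single_eq_of_ne' hac,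
        Finsupp.single_eq_of_ne' (Ne.symm hac), tsub_zero, tsub_zero]
      rw [show (s - fun₀ | c => 1) - (fun₀ | a => 1) = (s - fun₀ | a => 1) - fun₀ | c => 1 by
        ext x; simp [Finsupp.tsub_apply]; omega]
      ring_nf
  | add p q hp hq => simp [map_add, hp, hq]

lemma Jc_comm (b : K) (m k : ℤ) (P : MvPolynomial ℕ K) :
    Jc b m (Jc b k P) - Jc b k (Jc b m P)
      = if m + k = 0 then ((1 + b) * (m : K)) • P else 0 := by
  rcases lt_trichotomy m 0 with hm | hm | hm
  · rcases lt_trichotomy k 0 with hk | hk | hk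
    · rw [Jc_neg b hm, Jc_neg b hk, Jc_neg b hm, Jc_neg b hk, if_neg (by omega)]
      ring_nf
    · subst hk
      rw [Jc_zero', Jc_zero', Jc_map_zero, sub_self, if_neg (by omega)]
    · -- m < 0 < k
      rw [Jc_pos b hk, Jc_neg b hm, Jc_neg b hm, Jc_pos b hk, pderiv_mul, pderiv_X,
        Pi.single_apply]
      rcases eq_or_ne (m + k) 0 with h | h
      · rw [if_pos h, if_pos (by omega : (-m).toNat = k.toNat)]
        have hmk : (m : K) = -(k : K) := by
          have : m = -k := by omega
          simp [this]
        rw [hmk]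
        simp [smul_add, mul_smul_comm]
      · rw [if_neg h, if_neg (by omega : ¬ (-m).toNat = k.toNat)]
        simp [smul_add, mul_smul_comm]
  · subst hm
    rw [Jc_zero', Jc_zero', Jc_map_zero, zero_sub, neg_zero]
    simp
  · rcases lt_trichotomy k 0 with hk | hk | hk
    · -- k < 0 < m
      rw [Jc_pos b hm, Jc_neg b hk, Jc_pos b hm, Jc_neg b hk, pderiv_mul, pderiv_X,
        Pi.single_apply]
      rcases eq_or_ne (m + k) 0 with h | h
      · rw [if_pos h, if_pos (by omega : (-k).toNat = m.toNat)]
        simp [smul_add, mul_smul_comm]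
      · rw [if_neg h, if_neg (by omega : ¬ (-k).toNat = m.toNat)]
        simp [smul_add, mul_smul_comm]
    · subst hk
      rw [Jc_zero', Jc_zero', Jc_map_zero, sub_zero, if_neg (by omega)]
    · rw [Jc_pos b hm, Jc_pos b hk, Jc_pos b hm, Jc_pos b hk, if_neg (by omega),
        Derivation.map_smul, Derivation.map_smul, pderiv_comm', smul_comm, sub_self]

lemma Aop_zero (b : K) (i : ℕ) (P : MvPolynomial ℕ K) :
    Aop b 0 i P = if i = 1 then (1 + b)⁻¹ • P else 0 := rfl

lemma Aop_succ (b : K) (s i : ℕ) (P : MvPolynomial ℕ K) :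
    Aop b (s + 1) i P =
      (∑ᶠ n : ℕ, if 1 ≤ n then Jc b ((i : ℤ) - n) (Aop b s n P) else 0)
        + (b * ((i : K) - 1)) • Aop b s i P := rfl

lemma Aop_one (b : K) (i : ℕ) (P : MvPolynomial ℕ K) :
    Aop b 1 i P = (1 + b)⁻¹ • Jc b ((i : ℤ) - 1) P := by
  rw [show (1 : ℕ) = 0 + 1 from rfl, Aop_succ]
  rw [finsum_eq_single _ 1 (by
    intro n hn
    rcases Nat.eq_zero_or_pos n with h0 | h1
    · rw [h0, if_neg (by omega)]
    · rw [if_pos (by omega : 1 ≤ n), Aop_zero, if_neg hn, Jc_map_zero])]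
  rw [if_pos le_rfl, Aop_zero, Aop_zero, if_pos rfl, Jc_smul]
  rcases eq_or_ne i 1 with rfl | hi
  · norm_num
  · rw [if_neg hi, smul_zero, add_zero, Nat.cast_one]

lemma support_fin (b : K) (j : ℕ) (P : MvPolynomial ℕ K) :
    (Function.support fun n : ℕ =>
      if 1 ≤ n then Jc b ((j : ℤ) - n) (Jc b ((n : ℤ) - 1) P) else 0).Finite := by
  apply Set.Finite.subset (Set.finite_Iic (P.vars.sup id + 2))
  intro n hn
  simp only [Function.mem_support] at hn
  by_contra hle
  simp only [Set.mem_Iic, not_le] at hle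
  apply hn
  rw [if_pos (by omega : 1 ≤ n), Jc_pos b (by omega : (0:ℤ) < (n : ℤ) - 1)]
  have hnot : ((n : ℤ) - 1).toNat ∉ P.vars := by
    intro hmem
    have h2 := Finset.le_sup (f := id) hmem
    simp only [id] at h2
    omega
  rw [pderiv_eq_zero_of_notMem_vars hnot, smul_zero, Jc_map_zero]

noncomputable def JcHom (b : K) (m : ℤ) : MvPolynomial ℕ K →+ MvPolynomial ℕ K where
  toFun := Jc b m
  map_zero' := Jc_map_zero b m
  map_add' := Jc_add b m

lemma Aop_two (b : K) (j : ℕ) (Q : MvPolynomial ℕ K) :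
    Aop b 2 j Q
      = (1 + b)⁻¹ •
          (∑ᶠ n : ℕ, if 1 ≤ n then Jc b ((j : ℤ) - n) (Jc b ((n : ℤ) - 1) Q) else 0)
        + (b * ((j : K) - 1) * (1 + b)⁻¹) • Jc b ((j : ℤ) - 1) Q := by
  rw [show (2 : ℕ) = 1 + 1 from rfl, Aop_succ, Aop_one, smul_smul]
  congr 1
  rw [smul_finsum]
  apply finsum_congr
  intro n
  rcases Nat.eq_zero_or_pos n with h0 | h1
  · rw [h0]; simp
  · rw [if_pos (by omega : 1 ≤ n), if_pos (by omega : 1 ≤ n), Aop_one, Jc_smul]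

lemma sum_part (b : K) (i j : ℕ) (hi : 1 ≤ i) (hj : 1 ≤ j) (P : MvPolynomial ℕ K) :
    Jc b ((i : ℤ) - 1)
        (∑ᶠ n : ℕ, if 1 ≤ n then Jc b ((j : ℤ) - n) (Jc b ((n : ℤ) - 1) P) else 0)
      - (∑ᶠ n : ℕ,
          if 1 ≤ n then Jc b ((j : ℤ) - n) (Jc b ((n : ℤ) - 1) (Jc b ((i : ℤ) - 1) P)) else 0)
    = ((1 + b) * ((i : K) - 1)) • Jc b (((i + j - 1 : ℕ) : ℤ) - 1) P := by
  have hfinP := support_fin b j P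
  have hfinQ := support_fin b j (Jc b ((i : ℤ) - 1) P)
  have hmap : Jc b ((i : ℤ) - 1)
        (∑ᶠ n : ℕ, if 1 ≤ n then Jc b ((j : ℤ) - n) (Jc b ((n : ℤ) - 1) P) else 0)
      = ∑ᶠ n : ℕ, Jc b ((i : ℤ) - 1)
          (if 1 ≤ n then Jc b ((j : ℤ) - n) (Jc b ((n : ℤ) - 1) P) else 0) :=
    (JcHom b ((i : ℤ) - 1)).map_finsum hfinP
  have hfin1 : (Function.support fun n : ℕ => Jc b ((i : ℤ) - 1)
      (if 1 ≤ n then Jc b ((j : ℤ) - n) (Jc b ((n : ℤ) - 1) P) else 0)).Finite := by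
    apply hfinP.subset
    intro n hn
    simp only [Function.mem_support] at hn ⊢
    intro h0
    exact hn (by rw [h0, Jc_map_zero])
  have swap : ∀ n : ℕ, 1 ≤ n →
      Jc b ((n : ℤ) - 1) (Jc b ((i : ℤ) - 1) P) = Jc b ((i : ℤ) - 1) (Jc b ((n : ℤ) - 1) P) := by
    intro n hn
    have h := Jc_comm b ((n : ℤ) - 1) ((i : ℤ) - 1) P
    have hz : (if ((n : ℤ) - 1) + ((i : ℤ) - 1) = 0
        then ((1 + b) * ((((n : ℤ) - 1) : ℤ) : K)) • P else 0) = 0 := by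
      split_ifs with hc
      · have hn1 : (n : ℤ) - 1 = 0 := by omega
        rw [hn1]; simp
      · rfl
    rw [hz] at h
    exact sub_eq_zero.mp h
  rw [hmap, ← finsum_sub_distrib hfin1 hfinQ]
  rw [finsum_eq_single _ (i + j - 1) ?_]
  · rw [if_pos (by omega : 1 ≤ i + j - 1), if_pos (by omega : 1 ≤ i + j - 1),
      swap _ (by omega : 1 ≤ i + j - 1), Jc_comm,
      if_pos (by omega : ((i : ℤ) - 1) + ((j : ℤ) - (i + j - 1 : ℕ)) = 0)]
    push_cast
    ring_nf
  · intro n hn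
    rcases Nat.eq_zero_or_pos n with h0 | h1
    · rw [h0]
      simp [Jc_map_zero]
    · rw [if_pos (by omega : 1 ≤ n), if_pos (by omega : 1 ≤ n), swap n (by omega), Jc_comm,
        if_neg (by omega : ¬ ((i : ℤ) - 1) + ((j : ℤ) - (n : ℤ)) = 0)]

lemma key (b : K) (i j : ℕ) (hi : 1 ≤ i) (hj : 1 ≤ j) (P : MvPolynomial ℕ K) :
    Aop b 1 i (Aop b 2 j P) - Aop b 2 j (Aop b 1 i P)
      = ((i : K) - 1) • Aop b 1 (i + j - 1) P := by
  rw [Aop_two b j P, Aop_one b i P, Aop_two b j, Aop_one b i, Aop_one b (i + j - 1)]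
  have hinner :
      (∑ᶠ n : ℕ, if 1 ≤ n then
          Jc b ((j : ℤ) - n) (Jc b ((n : ℤ) - 1) ((1 + b)⁻¹ • Jc b ((i : ℤ) - 1) P)) else 0)
        = (1 + b)⁻¹ • ∑ᶠ n : ℕ, (if 1 ≤ n then
            Jc b ((j : ℤ) - n) (Jc b ((n : ℤ) - 1) (Jc b ((i : ℤ) - 1) P)) else 0) := by
    rw [smul_finsum]
    apply finsum_congr
    intro n
    split_ifs
    · rw [Jc_smul, Jc_smul]
    · rw [smul_zero]
  rw [hinner, Jc_add, Jc_smul, Jc_smul, Jc_smul]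
  have hcross : Jc b ((i : ℤ) - 1) (Jc b ((j : ℤ) - 1) P)
      = Jc b ((j : ℤ) - 1) (Jc b ((i : ℤ) - 1) P) := by
    have h := Jc_comm b ((i : ℤ) - 1) ((j : ℤ) - 1) P
    have hz : (if ((i : ℤ) - 1) + ((j : ℤ) - 1) = 0
        then ((1 + b) * ((((i : ℤ) - 1) : ℤ) : K)) • P else 0) = 0 := by
      split_ifs with hcond
      · have hi1 : (i : ℤ) - 1 = 0 := by omega
        rw [hi1]; simp
      · rfl
    rw [hz] at h
    exact sub_eq_zero.mp h
  have hsum := sum_part b i j hi hj P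
  have hS' : (∑ᶠ n : ℕ, if 1 ≤ n then
        Jc b ((j : ℤ) - n) (Jc b ((n : ℤ) - 1) (Jc b ((i : ℤ) - 1) P)) else 0)
      = Jc b ((i : ℤ) - 1)
          (∑ᶠ n : ℕ, if 1 ≤ n then Jc b ((j : ℤ) - n) (Jc b ((n : ℤ) - 1) P) else 0)
        - ((1 + b) * ((i : K) - 1)) • Jc b (((i + j - 1 : ℕ) : ℤ) - 1) P := by
    rw [← hsum]; abel
  rw [hcross, hS']
  rcases eq_or_ne (1 + b) 0 with h1b | h1b
  · simp [h1b]
  · match_scalars <;> field_simp <;> ring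

/-- `[A_i(1), A_j(2)] = (i-1)·A_{i+j-1}(1)`, and the antisymmetrized relation
`[A_i(1), A_j(2)] − [A_j(1), A_i(2)] = (i-j)·A_{i+j-1}(1)`. -/
theorem commutator_A1_A2 (b : K) (i j : ℕ) (hi : 1 ≤ i) (hj : 1 ≤ j) :
    commOp (Aop b 1 i) (Aop b 2 j) = ((i : K) - 1) • Aop b 1 (i + j - 1) ∧
    commOp (Aop b 1 i) (Aop b 2 j) - commOp (Aop b 1 j) (Aop b 2 i)
      = ((i : K) - (j : K)) • Aop b 1 (i + j - 1) := by
  have h1 : commOp (Aop b 1 i) (Aop b 2 j) = ((i : K) - 1) • Aop b 1 (i + j - 1) := by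
    funext P
    exact key b i j hi hj P
  have h2 : commOp (Aop b 1 j) (Aop b 2 i) = ((j : K) - 1) • Aop b 1 (i + j - 1) := by
    funext P
    rw [show i + j - 1 = j + i - 1 by omega]
    exact key b j i hj hi P
  refine ⟨h1, ?_⟩
  rw [h1, h2, ← sub_smul]
  congr 1
  ring
end

section
/- Fix a central element u and define currents with charge u: J_{-i} = p_i·, J_i = (1+b)i∂/∂p_i for i > 0, and J_0 = u. Define M_i(1) = J_{i−1}/(1+b) for i ≥ 1, and M_i(m+1) = Σ_{n≥1} J_{i−n−1} M_n(m) + b(i−1)M_{i−1}(m) (with M_0(m) = 0 for m ≥ 1). Then for all i, j ≥ 1: [M_i(2), M_j(2)] = (i−j)·M_{i+j−2}(2). -/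
open MvPolynomial

variable {K : Type*} [Field K]

/-- The `b`-deformed current with charge `u`, acting on `K[p_1, p_2, ...]`
(with `X n = p_n` for `n ≥ 1`): multiplication by `p_{-i}` for `i < 0`,
`(1+b)·i·∂/∂p_i` for `i > 0`, and the central scalar `u` for `i = 0`. -/
noncomputable def Jch (b u : K) (i : ℤ) : MvPolynomial ℕ K → MvPolynomial ℕ K :=
  if 0 < i then fun P => ((1 + b) * (i : K)) • pderiv i.toNat P
  else if i < 0 then fun P => X (-i).toNat * P
  else fun P => u • P

/-- The operators `M_i(m)` (denoted `M^{(1,m)}_i` in the paper), defined by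
`M_i(1) = J_{i-1}/(1+b)` for `i ≥ 1` and
`M_i(m+1) = Σ_{n≥1} J_{i−n−1} M_n(m) + b(i−1)·M_{i−1}(m)`, with `M_0(m) = 0`
(sums are pointwise, locally finite). `Mop b u 0` is junk. -/
noncomputable def Mop (b u : K) : ℕ → ℕ → MvPolynomial ℕ K → MvPolynomial ℕ K
  | 0, _ => 0
  | 1, i => if i = 0 then 0 else fun P => (1 + b)⁻¹ • Jch b u ((i : ℤ) - 1) P
  | m + 2, i => if i = 0 then 0 else fun P =>
      (∑ᶠ n : ℕ, if 1 ≤ n then Jch b u ((i : ℤ) - n - 1) (Mop b u (m + 1) n P) else 0)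
        + (b * ((i : K) - 1)) • Mop b u (m + 1) (i - 1) P

theorem pderiv_comm'_s14 {σ : Type*} [DecidableEq σ] (i j : σ) (p : MvPolynomial σ K) :
    pderiv i (pderiv j p) = pderiv j (pderiv i p) := by
  induction p using MvPolynomial.induction_on' with
  | monomial s a =>
    simp only [pderiv_monomial]
    rcases eq_or_ne i j with rfl | hij
    · rfl
    · rw [Finsupp.tsub_apply, Finsupp.tsub_apply, Finsupp.single_apply, Finsupp.single_apply,
        if_neg hij, if_neg (Ne.symm hij), Nat.sub_zero, Nat.sub_zero]
      have h1 : ((s - Finsupp.single j 1) - Finsupp.single i 1) = ((s - Finsupp.single i 1) - Finsupp.single j 1) := by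
        ext x; simp only [Finsupp.tsub_apply, Finsupp.single_apply]
        split_ifs <;> omega
      rw [h1]; congr 1; ring
  | add p q hp hq => simp [hp, hq]

noncomputable def jE (b u : K) (a : ℤ) : Module.End K (MvPolynomial ℕ K) :=
  if 0 < a then ((1 + b) * (a : K)) • (pderiv a.toNat).toLinearMap
  else if a < 0 then LinearMap.mulLeft K (X (-a).toNat)
  else u • LinearMap.id

lemma jE_pos_apply (b u : K) {a : ℤ} (ha : 0 < a) (P : MvPolynomial ℕ K) :
    jE b u a P = ((1 + b) * (a : K)) • pderiv a.toNat P := by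
  rw [jE, if_pos ha]; rfl

lemma jE_neg_apply (b u : K) {a : ℤ} (ha : a < 0) (P : MvPolynomial ℕ K) :
    jE b u a P = X (-a).toNat * P := by
  rw [jE, if_neg (by omega), if_pos ha]; rfl

lemma jE_zero_apply (b u : K) {a : ℤ} (ha : a = 0) (P : MvPolynomial ℕ K) :
    jE b u a P = u • P := by
  subst ha; rw [jE, if_neg (by omega), if_neg (by omega)]; rfl

lemma jE_swap (b u : K) (a c : ℤ) (P : MvPolynomial ℕ K) :
    jE b u a (jE b u c P) =
      jE b u c (jE b u a P) + (if a + c = 0 then (1 + b) * (a : K) else 0) • P := by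
  have hps : ∀ (a c : ℤ), 0 < a → c < 0 → ∀ P : MvPolynomial ℕ K,
      jE b u a (jE b u c P) =
        jE b u c (jE b u a P) + (if a + c = 0 then (1 + b) * (a : K) else 0) • P := by
    intro a c ha hc P
    rw [jE_neg_apply b u hc, jE_pos_apply b u ha, jE_pos_apply b u ha,
      jE_neg_apply b u hc, pderiv_mul]
    rcases eq_or_ne (a + c) 0 with h | h
    · rw [if_pos h]
      have h1 : (-c).toNat = a.toNat := by omega
      rw [h1, pderiv_X_self, smul_add, mul_smul_comm, one_mul, add_comm]
    · rw [if_neg h, pderiv_X_of_ne (by omega), smul_add, mul_smul_comm, zero_mul,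
        smul_zero, zero_add, zero_smul, add_zero]
  rcases eq_or_ne a 0 with rfl | ha0
  · rw [jE_zero_apply b u rfl, jE_zero_apply b u rfl, map_smul]
    have : (if (0:ℤ) + c = 0 then (1 + b) * ((0:ℤ):K) else 0) = 0 := by
      split_ifs <;> simp
    rw [this, zero_smul, add_zero]
  rcases eq_or_ne c 0 with rfl | hc0
  · rw [jE_zero_apply b u rfl, jE_zero_apply b u rfl, map_smul]
    rw [if_neg (by omega), zero_smul, add_zero]
  rcases lt_trichotomy a 0 with ha | ha | ha
  · rcases lt_trichotomy c 0 with hc | hc | hc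
    · rw [jE_neg_apply b u ha, jE_neg_apply b u hc, jE_neg_apply b u hc,
        jE_neg_apply b u ha, if_neg (by omega), zero_smul, add_zero]
      ring
    · omega
    · -- a < 0 < c : use symmetric case
      have h2 := hps c a hc ha P
      rw [h2, add_assoc, ← add_smul]
      have h3 : ((if c + a = 0 then (1 + b) * (c : K) else 0)
          + (if a + c = 0 then (1 + b) * (a : K) else 0)) = 0 := by
        rcases eq_or_ne (a + c) 0 with h | h
        · rw [if_pos (by omega), if_pos h, ← mul_add]
          have h4 : (c : K) + (a : K) = ((c + a : ℤ) : K) := by push_cast; ring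
          have h5 : c + a = 0 := by omega
          rw [h4, h5, Int.cast_zero, mul_zero]
        · rw [if_neg (by omega), if_neg h, add_zero]
      rw [h3, zero_smul, add_zero]
  · omega
  · rcases lt_trichotomy c 0 with hc | hc | hc
    · exact hps a c ha hc P
    · omega
    · rw [jE_pos_apply b u ha, jE_pos_apply b u hc, jE_pos_apply b u hc,
        jE_pos_apply b u ha, if_neg (by omega), zero_smul, add_zero, Derivation.map_smul, Derivation.map_smul,
        pderiv_comm'_s14, smul_comm]

/-- bound on variables -/
noncomputable def bnd (Q : MvPolynomial ℕ K) : ℤ := ((Q.vars.sup id : ℕ) : ℤ) + 1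

lemma bnd_nonneg (Q : MvPolynomial ℕ K) : 0 ≤ bnd Q := by unfold bnd; omega

lemma jE_eq_zero_of_big (b u : K) {Q : MvPolynomial ℕ K} {a : ℤ} (h : bnd Q ≤ a) :
    jE b u a Q = 0 := by
  have h0 : (0:ℤ) ≤ ((Q.vars.sup id : ℕ) : ℤ) := by omega
  have ha : 0 < a := by unfold bnd at h; omega
  rw [jE_pos_apply b u ha, pderiv_eq_zero_of_notMem_vars, smul_zero]
  intro hmem
  have h2 := Finset.le_sup (f := id) hmem
  simp only [id] at h2
  unfold bnd at h
  omega

lemma fin_of_bound {f : ℤ → MvPolynomial ℕ K} (A B : ℤ)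
    (h : ∀ m : ℤ, m < A ∨ B < m → f m = 0) : (Function.support f).Finite := by
  apply Set.Finite.subset (Set.finite_Icc A B)
  intro m hm
  rw [Function.mem_support] at hm
  rw [Set.mem_Icc]
  by_contra hc
  exact hm (h m (by omega))

/-- the quadratic part of `M(2)`, with modes shifted by 2 : `G k = Σ_{m ≥ 0} j_{k-m} j_m`. -/
noncomputable def GG (b u : K) (k : ℤ) (Q : MvPolynomial ℕ K) : MvPolynomial ℕ K :=
  ∑ᶠ m : ℤ, if 0 ≤ m then jE b u (k - m) (jE b u m Q) else 0

lemma GG_supp_fin (b u : K) (k : ℤ) (Q : MvPolynomial ℕ K) :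
    (Function.support fun m : ℤ =>
      if 0 ≤ m then jE b u (k - m) (jE b u m Q) else 0).Finite := by
  have hb := bnd_nonneg Q
  apply fin_of_bound 0 (bnd Q)
  intro m hm
  rcases hm with hm | hm
  · rw [if_neg (by omega)]
  · rw [if_pos (by omega), jE_eq_zero_of_big b u (Q := Q) (a := m) (by omega), map_zero]

lemma GG_add (b u : K) (k : ℤ) (Q R : MvPolynomial ℕ K) :
    GG b u k (Q + R) = GG b u k Q + GG b u k R := by
  unfold GG
  rw [← finsum_add_distrib (GG_supp_fin b u k Q) (GG_supp_fin b u k R)]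
  apply finsum_congr
  intro m
  split_ifs with h
  · rw [map_add, map_add]
  · rw [add_zero]

lemma GG_smul (b u : K) (k : ℤ) (s : K) (Q : MvPolynomial ℕ K) :
    GG b u k (s • Q) = s • GG b u k Q := by
  unfold GG
  rw [smul_finsum' s (GG_supp_fin b u k Q)]
  apply finsum_congr
  intro m
  split_ifs with h
  · rw [map_smul, map_smul]
  · rw [smul_zero]

lemma GG_zero (b u : K) (k : ℤ) : GG b u k 0 = 0 := by
  have := GG_smul b u k 0 0
  simpa using this

/-- `GG` as an `AddMonoidHom`. -/
noncomputable def GGh (b u : K) (k : ℤ) : MvPolynomial ℕ K →+ MvPolynomial ℕ K :=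
  AddMonoidHom.mk' (GG b u k) (GG_add b u k)

lemma map_finsum_lin (f : Module.End K (MvPolynomial ℕ K)) {g : ℤ → MvPolynomial ℕ K}
    (hg : (Function.support g).Finite) : f (∑ᶠ m, g m) = ∑ᶠ m, f (g m) :=
  f.toAddMonoidHom.map_finsum hg

lemma GG_finsum (b u : K) (k : ℤ) {g : ℤ → MvPolynomial ℕ K}
    (hg : (Function.support g).Finite) : GG b u k (∑ᶠ m, g m) = ∑ᶠ m, GG b u k (g m) :=
  (GGh b u k).map_finsum hg

lemma GGh_apply (b u : K) (k : ℤ) (Q : MvPolynomial ℕ K) : GGh b u k Q = GG b u k Q := rfl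

/-- integer weights -/
def wt (k a : ℤ) : ℤ := (if a ≤ 0 then 1 else 0) + (if 0 ≤ k + a then 1 else 0)

lemma stepA (b u : K) (a k : ℤ) (Q : MvPolynomial ℕ K) :
    jE b u a (GG b u k Q) = GG b u k (jE b u a Q)
      + ((1 + b) * ((a * wt k a : ℤ) : K)) • jE b u (k + a) Q := by
  unfold GG
  rw [map_finsum_lin (jE b u a) (GG_supp_fin b u k Q)]
  have e1 : ∀ m : ℤ, (if a + (k - m) = 0 then (1 + b) * (a:K) else 0)
      = if m = k + a then (1 + b) * (a:K) else 0 := by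
    intro m; exact if_congr (by omega) rfl rfl
  have e2 : ∀ m : ℤ, (if a + m = 0 then (1 + b) * (a:K) else 0)
      = if m = -a then (1 + b) * (a:K) else 0 := by
    intro m; exact if_congr (by omega) rfl rfl
  have step : ∀ m : ℤ, jE b u a (if 0 ≤ m then jE b u (k - m) (jE b u m Q) else 0)
      = (if 0 ≤ m then jE b u (k - m) (jE b u m (jE b u a Q)) else 0)
        + ((if 0 ≤ m then (if m = -a then (1 + b) * (a:K) else 0) • jE b u (k - m) Q else 0)
        + (if 0 ≤ m then (if m = k + a then (1 + b) * (a:K) else 0) • jE b u m Q else 0)) := by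
    intro m
    by_cases h : 0 ≤ m
    · simp only [if_pos h]
      rw [jE_swap b u a (k - m), jE_swap b u a m, map_add, map_smul, e1, e2, add_assoc]
    · simp only [if_neg h, map_zero, add_zero]
  rw [finsum_congr step]
  have fin2 : (Function.support fun m : ℤ =>
      if 0 ≤ m then (if m = -a then (1 + b) * (a:K) else 0) • jE b u (k - m) Q else 0).Finite := by
    apply Set.Finite.subset (Set.finite_singleton (-a))
    intro m hm
    rw [Function.mem_support] at hm
    rw [Set.mem_singleton_iff]
    by_contra hne
    apply hm
    by_cases h : (0:ℤ) ≤ m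
    · rw [if_pos h, if_neg hne, zero_smul]
    · rw [if_neg h]
  have fin3 : (Function.support fun m : ℤ =>
      if 0 ≤ m then (if m = k + a then (1 + b) * (a:K) else 0) • jE b u m Q else 0).Finite := by
    apply Set.Finite.subset (Set.finite_singleton (k + a))
    intro m hm
    rw [Function.mem_support] at hm
    rw [Set.mem_singleton_iff]
    by_contra hne
    apply hm
    by_cases h : (0:ℤ) ≤ m
    · rw [if_pos h, if_neg hne, zero_smul]
    · rw [if_neg h]
  rw [finsum_add_distrib (GG_supp_fin b u k (jE b u a Q)) (Set.Finite.subset (fin2.union fin3)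
    (Function.support_add _ _)), finsum_add_distrib fin2 fin3]
  congr 1
  have v2 : (∑ᶠ m : ℤ, if 0 ≤ m then (if m = -a then (1 + b) * (a:K) else 0) • jE b u (k - m) Q else 0)
      = ((1 + b) * (((a * if a ≤ 0 then 1 else 0 : ℤ)) : K)) • jE b u (k + a) Q := by
    rw [finsum_eq_single _ (-a) ?_]
    · by_cases h1 : (0:ℤ) ≤ -a
      · rw [if_pos h1, if_pos rfl, if_pos (by omega : a ≤ 0)]
        have hk : k - -a = k + a := by ring
        rw [hk]
        congr 1
        push_cast
        ring
      · rw [if_neg h1, if_neg (by omega : ¬ a ≤ 0)]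
        push_cast
        rw [mul_zero, mul_zero, zero_smul]
    · intro m hm
      by_cases h : (0:ℤ) ≤ m
      · rw [if_pos h, if_neg hm, zero_smul]
      · rw [if_neg h]
  have v3 : (∑ᶠ m : ℤ, if 0 ≤ m then (if m = k + a then (1 + b) * (a:K) else 0) • jE b u m Q else 0)
      = ((1 + b) * (((a * if 0 ≤ k + a then 1 else 0 : ℤ)) : K)) • jE b u (k + a) Q := by
    rw [finsum_eq_single _ (k + a) ?_]
    · by_cases h1 : (0:ℤ) ≤ k + a
      · rw [if_pos h1, if_pos rfl, if_pos h1]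
        congr 1
        push_cast
        ring
      · rw [if_neg h1, if_neg h1]
        push_cast
        rw [mul_zero, mul_zero, zero_smul]
    · intro m hm
      by_cases h : (0:ℤ) ≤ m
      · rw [if_pos h, if_neg hm, zero_smul]
      · rw [if_neg h]
  rw [v2, v3, ← add_smul]
  congr 1
  unfold wt
  push_cast
  ring

lemma Gcomm (b u : K) (k l : ℤ) (hk : -1 ≤ k) (hl : -1 ≤ l) (Q : MvPolynomial ℕ K) :
    GG b u k (GG b u l Q) - GG b u l (GG b u k Q)
      = ((1 + b) * ((k - l : ℤ) : K)) • GG b u (k + l) Q := by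
  -- Step 1: push GG k inside the finsum defining GG l Q
  have h1 : GG b u k (GG b u l Q)
      = ∑ᶠ m : ℤ, if 0 ≤ m then GG b u k (jE b u (l - m) (jE b u m Q)) else 0 := by
    rw [show GG b u l Q = ∑ᶠ m : ℤ, if 0 ≤ m then jE b u (l - m) (jE b u m Q) else 0 from rfl,
      GG_finsum b u k (GG_supp_fin b u l Q)]
    apply finsum_congr
    intro m
    by_cases h : (0:ℤ) ≤ m
    · rw [if_pos h, if_pos h]
    · rw [if_neg h, if_neg h, GG_zero]
  -- Step 2: pointwise commutation
  have h2 : ∀ m : ℤ, (if 0 ≤ m then GG b u k (jE b u (l - m) (jE b u m Q)) else 0)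
      = (if 0 ≤ m then jE b u (l - m) (jE b u m (GG b u k Q)) else 0)
        - ((if 0 ≤ m then ((1 + b) * ((m * wt k m : ℤ) : K))
              • jE b u (l - m) (jE b u (k + m) Q) else 0)
         + (if 0 ≤ m then ((1 + b) * (((l - m) * wt k (l - m) : ℤ) : K))
              • jE b u (k + l - m) (jE b u m Q) else 0)) := by
    intro m
    by_cases h : (0:ℤ) ≤ m
    · simp only [if_pos h]
      have s1' : GG b u k (jE b u (l - m) (jE b u m Q))
          = jE b u (l - m) (GG b u k (jE b u m Q))
            - ((1 + b) * (((l - m) * wt k (l - m) : ℤ) : K))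
                • jE b u (k + (l - m)) (jE b u m Q) := by
        rw [stepA b u (l - m) k (jE b u m Q), add_sub_cancel_right]
      have s2' : GG b u k (jE b u m Q) = jE b u m (GG b u k Q)
          - ((1 + b) * ((m * wt k m : ℤ) : K)) • jE b u (k + m) Q := by
        rw [stepA b u m k Q, add_sub_cancel_right]
      have e1 : k + (l - m) = k + l - m := by ring
      rw [s1', s2', map_sub, map_smul, e1]
      abel
    · simp only [if_neg h, GG_zero, sub_zero, add_zero]
  -- finiteness of the three families
  have finB : (Function.support fun m : ℤ => if 0 ≤ m then
      ((1 + b) * ((m * wt k m : ℤ) : K)) • jE b u (l - m) (jE b u (k + m) Q) else 0).Finite := by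
    have hb := bnd_nonneg Q
    apply fin_of_bound 0 (bnd Q)
    intro m hm
    rcases hm with hm | hm
    · rw [if_neg (by omega)]
    · rw [if_pos (by omega), jE_eq_zero_of_big b u (Q := Q) (a := k + m) (by omega),
        map_zero, smul_zero]
  have finC : (Function.support fun m : ℤ => if 0 ≤ m then
      ((1 + b) * (((l - m) * wt k (l - m) : ℤ) : K))
        • jE b u (k + l - m) (jE b u m Q) else 0).Finite := by
    have hb := bnd_nonneg Q
    apply fin_of_bound 0 (bnd Q)
    intro m hm
    rcases hm with hm | hm
    · rw [if_neg (by omega)]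
    · rw [if_pos (by omega), jE_eq_zero_of_big b u (Q := Q) (a := m) (by omega),
        map_zero, smul_zero]
  rw [h1, finsum_congr h2,
    finsum_sub_distrib (GG_supp_fin b u l (GG b u k Q))
      (Set.Finite.subset (finB.union finC) (Function.support_add _ _)),
    finsum_add_distrib finB finC]
  rw [show (∑ᶠ m : ℤ, if 0 ≤ m then jE b u (l - m) (jE b u m (GG b u k Q)) else 0)
      = GG b u l (GG b u k Q) from rfl]
  rw [sub_sub_cancel_left]
  -- Main computation : the two error sums add up to -(k-l)(1+b) G_{k+l}
  have hb := bnd_nonneg Q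
  -- simplify the weight in the first error sum and reindex
  have w1 : ∀ m : ℤ, 0 ≤ m → m * wt k m = m := by
    intro m hm; unfold wt; split_ifs <;> omega
  have step1 : (∑ᶠ m : ℤ, if 0 ≤ m then
        ((1 + b) * ((m * wt k m : ℤ) : K)) • jE b u (l - m) (jE b u (k + m) Q) else 0)
      = ∑ᶠ m : ℤ, if k ≤ m then
        ((1 + b) * ((m - k : ℤ) : K)) • jE b u (k + l - m) (jE b u m Q) else 0 := by
    rw [← finsum_comp (g := fun m : ℤ => if k ≤ m then
        ((1 + b) * ((m - k : ℤ) : K)) • jE b u (k + l - m) (jE b u m Q) else 0)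
      (fun m : ℤ => m + k) (Equiv.addRight k).bijective]
    apply finsum_congr
    intro m
    by_cases h : (0:ℤ) ≤ m
    · rw [if_pos h, if_pos (show k ≤ m + k by omega)]
      rw [show k + l - (m + k) = l - m from by ring, show m + k - k = m from by ring,
          show m + k = k + m from by ring, w1 m h]
    · rw [if_neg h, if_neg (show ¬ k ≤ m + k by omega)]
  rw [step1]
  have fin1' : (Function.support fun m : ℤ => if k ≤ m then
      ((1 + b) * ((m - k : ℤ) : K)) • jE b u (k + l - m) (jE b u m Q) else 0).Finite := by
    apply fin_of_bound k (bnd Q)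
    intro m hm
    rcases hm with hm | hm
    · rw [if_neg (by omega)]
    · by_cases hkm : k ≤ m
      · rw [if_pos hkm, jE_eq_zero_of_big b u (Q := Q) (a := m) (by omega),
          map_zero, smul_zero]
      · rw [if_neg hkm]
  rw [← finsum_add_distrib fin1' finC]
  -- pointwise coefficient identity
  have conv : ∀ (P : Prop) [Decidable P] (n : ℤ) (x : MvPolynomial ℕ K),
      (if P then ((1 + b) * ((n : ℤ) : K)) • x else 0)
        = ((1 + b) * (((if P then n else 0 : ℤ)) : K)) • x := by
    intro P _ n x
    split_ifs with h
    · rfl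
    · rw [Int.cast_zero, mul_zero, zero_smul]
  have key2 : ∀ m : ℤ,
      ((if k ≤ m then ((1 + b) * ((m - k : ℤ) : K)) • jE b u (k + l - m) (jE b u m Q) else 0)
        + (if 0 ≤ m then ((1 + b) * (((l - m) * wt k (l - m) : ℤ) : K))
            • jE b u (k + l - m) (jE b u m Q) else 0))
      = (if 0 ≤ m then ((1 + b) * ((l - k : ℤ) : K)) • jE b u (k + l - m) (jE b u m Q) else 0)
        + ((if 0 ≤ m ∧ m ≤ k then
              ((1 + b) * ((k - m : ℤ) : K)) • jE b u (k + l - m) (jE b u m Q) else 0)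
          + (if l ≤ m ∧ m ≤ k + l then
              ((1 + b) * ((l - m : ℤ) : K)) • jE b u (k + l - m) (jE b u m Q) else 0)) := by
    intro m
    have hz : ((if k ≤ m then m - k else 0) + (if 0 ≤ m then (l - m) * wt k (l - m) else 0) : ℤ)
        = (if 0 ≤ m then l - k else 0) + ((if 0 ≤ m ∧ m ≤ k then k - m else 0)
            + (if l ≤ m ∧ m ≤ k + l then l - m else 0)) := by
      unfold wt; split_ifs <;> omega
    rw [conv, conv, conv, conv, conv, ← add_smul, ← add_smul, ← add_smul, ← mul_add,
      ← mul_add, ← mul_add, ← Int.cast_add, ← Int.cast_add, ← Int.cast_add, hz]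
  rw [finsum_congr key2]
  have finA2 : (Function.support fun m : ℤ => if 0 ≤ m then
      ((1 + b) * ((l - k : ℤ) : K)) • jE b u (k + l - m) (jE b u m Q) else 0).Finite := by
    apply fin_of_bound 0 (bnd Q)
    intro m hm
    rcases hm with hm | hm
    · rw [if_neg (by omega)]
    · rw [if_pos (by omega), jE_eq_zero_of_big b u (Q := Q) (a := m) (by omega),
        map_zero, smul_zero]
  have finB2 : (Function.support fun m : ℤ => if 0 ≤ m ∧ m ≤ k then
      ((1 + b) * ((k - m : ℤ) : K)) • jE b u (k + l - m) (jE b u m Q) else 0).Finite := by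
    apply fin_of_bound 0 k
    intro m hm
    rw [if_neg (by omega)]
  have finC2 : (Function.support fun m : ℤ => if l ≤ m ∧ m ≤ k + l then
      ((1 + b) * ((l - m : ℤ) : K)) • jE b u (k + l - m) (jE b u m Q) else 0).Finite := by
    apply fin_of_bound l (k + l)
    intro m hm
    rw [if_neg (by omega)]
  rw [finsum_add_distrib finA2 (Set.Finite.subset (finB2.union finC2)
    (Function.support_add _ _)), finsum_add_distrib finB2 finC2]
  -- the A-sum gives the result
  have hA : (∑ᶠ m : ℤ, if 0 ≤ m then
      ((1 + b) * ((l - k : ℤ) : K)) • jE b u (k + l - m) (jE b u m Q) else 0)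
      = ((1 + b) * ((l - k : ℤ) : K)) • GG b u (k + l) Q := by
    rw [show GG b u (k + l) Q
        = ∑ᶠ m : ℤ, if 0 ≤ m then jE b u (k + l - m) (jE b u m Q) else 0 from rfl,
      smul_finsum' _ (GG_supp_fin b u (k + l) Q)]
    apply finsum_congr
    intro m
    by_cases h : (0:ℤ) ≤ m
    · rw [if_pos h, if_pos h]
    · rw [if_neg h, if_neg h, smul_zero]
  -- the B and C sums cancel against each other
  have reC : (∑ᶠ m : ℤ, if l ≤ m ∧ m ≤ k + l then
      ((1 + b) * ((l - m : ℤ) : K)) • jE b u (k + l - m) (jE b u m Q) else 0)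
      = ∑ᶠ m : ℤ, if 0 ≤ m ∧ m ≤ k then
        ((1 + b) * ((m - k : ℤ) : K)) • jE b u m (jE b u (k + l - m) Q) else 0 := by
    rw [← finsum_comp (g := fun m : ℤ => if l ≤ m ∧ m ≤ k + l then
        ((1 + b) * ((l - m : ℤ) : K)) • jE b u (k + l - m) (jE b u m Q) else 0)
      (fun m : ℤ => k + l - m)
      (Function.Involutive.bijective (fun m : ℤ => by ring : Function.Involutive _))]
    apply finsum_congr
    intro m
    by_cases h : (0:ℤ) ≤ m ∧ m ≤ k
    · rw [if_pos (show l ≤ k + l - m ∧ k + l - m ≤ k + l by omega), if_pos h]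
      rw [show l - (k + l - m) = m - k from by ring,
        show k + l - (k + l - m) = m from by ring]
    · rw [if_neg (show ¬ (l ≤ k + l - m ∧ k + l - m ≤ k + l) by omega), if_neg h]
  have finC2' : (Function.support fun m : ℤ => if 0 ≤ m ∧ m ≤ k then
      ((1 + b) * ((m - k : ℤ) : K)) • jE b u m (jE b u (k + l - m) Q) else 0).Finite := by
    apply fin_of_bound 0 k
    intro m hm
    rw [if_neg (by omega)]
  have hBC : (∑ᶠ m : ℤ, if 0 ≤ m ∧ m ≤ k then
      ((1 + b) * ((k - m : ℤ) : K)) • jE b u (k + l - m) (jE b u m Q) else 0)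
      + (∑ᶠ m : ℤ, if l ≤ m ∧ m ≤ k + l then
      ((1 + b) * ((l - m : ℤ) : K)) • jE b u (k + l - m) (jE b u m Q) else 0) = 0 := by
    rw [reC, ← finsum_add_distrib finB2 finC2']
    refine Eq.trans (finsum_congr ?_) finsum_zero
    intro m
    by_cases hc : (0:ℤ) ≤ m ∧ m ≤ k
    · rw [if_pos hc, if_pos hc]
      rw [jE_swap b u (k + l - m) m Q, smul_add,
        show ((1 + b) * ((m - k : ℤ) : K)) = -((1 + b) * ((k - m : ℤ) : K)) from by
          push_cast; ring,
        neg_smul]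
      have hδ : ((1 + b) * ((k - m : ℤ) : K))
          • ((if (k + l - m) + m = 0 then (1 + b) * ((k + l - m : ℤ) : K) else 0) • Q) = 0 := by
        by_cases h0 : k + l = 0
        · rw [if_pos (by omega)]
          have hcase : k - m = 0 ∨ k + l - m = 0 := by omega
          rcases hcase with h | h
          · rw [h, Int.cast_zero, mul_zero, zero_smul]
          · rw [h, Int.cast_zero, mul_zero, zero_smul, smul_zero]
        · rw [if_neg (by omega), zero_smul, smul_zero]
      rw [hδ, add_zero, add_neg_cancel]
    · rw [if_neg hc, if_neg hc, add_zero]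
  rw [hBC, add_zero, hA, ← neg_smul]
  congr 1
  push_cast
  ring

noncomputable def TT (b u : K) (k : ℤ) (Q : MvPolynomial ℕ K) : MvPolynomial ℕ K :=
  GG b u k Q + (b * ((k + 1 : ℤ) : K)) • jE b u k Q

lemma TT_smul (b u : K) (k : ℤ) (s : K) (Q : MvPolynomial ℕ K) :
    TT b u k (s • Q) = s • TT b u k Q := by
  unfold TT
  rw [GG_smul, map_smul, smul_add, smul_comm]

lemma Tcomm (b u : K) (k l : ℤ) (hk : -1 ≤ k) (hl : -1 ≤ l) (Q : MvPolynomial ℕ K) :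
    TT b u k (TT b u l Q) - TT b u l (TT b u k Q)
      = ((1 + b) * ((k - l : ℤ) : K)) • TT b u (k + l) Q := by
  have z1 : ((k + 1) * (k * wt l k) : ℤ) = (k + 1) * k := by
    rcases le_or_gt k 0 with h | h
    · interval_cases k <;> ring
    · have hw : wt l k = 1 := by
        unfold wt; rw [if_neg (by omega), if_pos (by omega)]; norm_num
      rw [hw, mul_one]
  have z2 : ((l + 1) * (l * wt k l) : ℤ) = (l + 1) * l := by
    rcases le_or_gt l 0 with h | h
    · interval_cases l <;> ring
    · have hw : wt k l = 1 := by
        unfold wt; rw [if_neg (by omega), if_pos (by omega)]; norm_num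
      rw [hw, mul_one]
  unfold TT
  rw [GG_add, GG_smul, map_add, map_smul, GG_add, GG_smul, map_add, map_smul]
  have gc' : GG b u k (GG b u l Q)
      = GG b u l (GG b u k Q) + ((1 + b) * ((k - l : ℤ) : K)) • GG b u (k + l) Q := by
    rw [← Gcomm b u k l hk hl Q]; abel
  have sA1 : jE b u l (GG b u k Q) = GG b u k (jE b u l Q)
      + ((1 + b) * ((l * wt k l : ℤ) : K)) • jE b u (k + l) Q := stepA b u l k Q
  have sA2 : jE b u k (GG b u l Q) = GG b u l (jE b u k Q)
      + ((1 + b) * ((k * wt l k : ℤ) : K)) • jE b u (k + l) Q := by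
    rw [stepA b u k l Q, show l + k = k + l from add_comm l k]
  have sw := jE_swap b u k l Q
  rw [gc', sA1, sA2, sw]
  match_scalars
  all_goals try ring
  · -- coefficient of jE (k+l) Q
    have c1 : ((k : K) + 1) * ((k : K) * ((wt l k : ℤ) : K)) = ((k : K) + 1) * (k : K) := by
      exact_mod_cast congrArg (Int.cast : ℤ → K) z1
    have c2 : ((l : K) + 1) * ((l : K) * ((wt k l : ℤ) : K)) = ((l : K) + 1) * (l : K) := by
      exact_mod_cast congrArg (Int.cast : ℤ → K) z2
    linear_combination (b * (1 + b)) * c1 - (b * (1 + b)) * c2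
  · -- coefficient of Q
    by_cases h0 : k + l = 0
    · rw [if_pos h0]
      have hl' : l = -k := by omega
      subst hl'
      have hk1 : k ≤ 1 := by omega
      interval_cases k <;> push_cast <;> ring
    · rw [if_neg h0]
      ring

lemma Jch_eq (b u : K) (a : ℤ) (P : MvPolynomial ℕ K) : Jch b u a P = jE b u a P := by
  unfold Jch jE
  split_ifs <;> rfl

lemma Mop1_eq (b u : K) (n : ℕ) (hn : 1 ≤ n) (P : MvPolynomial ℕ K) :
    Mop b u 1 n P = (1 + b)⁻¹ • jE b u ((n : ℤ) - 1) P := by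
  simp only [Mop]
  rw [if_neg (by omega), Jch_eq]

lemma Mop2_eq (b u : K) (i : ℕ) (hi : 1 ≤ i) (P : MvPolynomial ℕ K) :
    Mop b u 2 i P = (1 + b)⁻¹ • TT b u ((i : ℤ) - 2) P := by
  rw [show Mop b u 2 i = (if i = 0 then 0 else fun P =>
      (∑ᶠ n : ℕ, if 1 ≤ n then Jch b u ((i : ℤ) - n - 1) (Mop b u 1 n P) else 0)
        + (b * ((i : K) - 1)) • Mop b u 1 (i - 1) P) from rfl]
  simp only [if_neg (show ¬ i = 0 by omega)]
  -- rewrite the summand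
  have key : ∀ n : ℕ, (if 1 ≤ n then Jch b u ((i:ℤ) - n - 1) (Mop b u 1 n P) else 0)
      = (1+b)⁻¹ • (if 1 ≤ n then jE b u ((i:ℤ) - n - 1) (jE b u ((n:ℤ) - 1) P) else 0) := by
    intro n
    by_cases hn : 1 ≤ n
    · rw [if_pos hn, if_pos hn, Jch_eq, Mop1_eq b u n hn, map_smul]
    · rw [if_neg hn, if_neg hn, smul_zero]
  have finN : (Function.support fun n : ℕ =>
      if 1 ≤ n then jE b u ((i:ℤ) - n - 1) (jE b u ((n:ℤ) - 1) P) else 0).Finite := by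
    have hb := bnd_nonneg P
    apply Set.Finite.subset (Set.finite_Icc 0 (bnd P + 1).toNat)
    intro n hn
    rw [Function.mem_support] at hn
    rw [Set.mem_Icc]
    by_contra hc
    apply hn
    rw [if_pos (by omega), jE_eq_zero_of_big b u (Q := P) (a := (n:ℤ) - 1) (by omega), map_zero]
  rw [finsum_congr key, ← smul_finsum' ((1+b)⁻¹) finN]
  -- identify the finsum with GG
  have conv1 : (∑ᶠ n : ℕ, if 1 ≤ n then jE b u ((i:ℤ) - n - 1) (jE b u ((n:ℤ) - 1) P) else 0)
      = GG b u ((i:ℤ) - 2) P := by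
    set F : ℤ → MvPolynomial ℕ K :=
      fun m => if 1 ≤ m then jE b u ((i:ℤ) - m - 1) (jE b u (m - 1) P) else 0 with hF
    have e1 : ∀ n : ℕ, (if 1 ≤ n then jE b u ((i:ℤ) - n - 1) (jE b u ((n:ℤ) - 1) P) else 0)
        = F (n : ℤ) := by
      intro n
      simp only [hF]
      by_cases hn : 1 ≤ n
      · rw [if_pos hn, if_pos (by omega : (1:ℤ) ≤ (n:ℤ))]
      · rw [if_neg hn, if_neg (by omega : ¬ (1:ℤ) ≤ (n:ℤ))]
    rw [finsum_congr e1, ← finsum_mem_range (f := F) (fun x y h => by exact_mod_cast h)]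
    have hrange : Set.range ((↑) : ℕ → ℤ) = {m : ℤ | 0 ≤ m} := by
      ext m
      constructor
      · rintro ⟨n, rfl⟩; exact Int.natCast_nonneg n
      · intro h; exact ⟨m.toNat, Int.toNat_of_nonneg h⟩
    rw [hrange, finsum_mem_def]
    have e2 : ∀ m : ℤ, Set.indicator {m : ℤ | 0 ≤ m} F m
        = (fun m' : ℤ => if 0 ≤ m' then jE b u ((i:ℤ) - 2 - m') (jE b u m' P) else 0)
            (m - 1) := by
      intro m
      simp only [Set.indicator_apply, hF, Set.mem_setOf_eq]
      by_cases h : (1:ℤ) ≤ m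
      · rw [if_pos (by omega : (0:ℤ) ≤ m), if_pos h, if_pos (by omega : (0:ℤ) ≤ m - 1),
          show (i:ℤ) - 2 - (m - 1) = (i:ℤ) - m - 1 from by ring]
      · by_cases h0 : (0:ℤ) ≤ m
        · rw [if_pos h0, if_neg h, if_neg (by omega)]
        · rw [if_neg h0, if_neg (by omega)]
    rw [finsum_congr e2]
    exact finsum_comp
      (g := fun m' : ℤ => if 0 ≤ m' then jE b u ((i:ℤ) - 2 - m') (jE b u m' P) else 0)
      (fun m : ℤ => m - 1) (Equiv.subRight (1:ℤ)).bijective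
  rw [conv1]
  -- the linear term
  have hb2 : (b * ((i:K) - 1)) • Mop b u 1 (i-1) P
      = (1+b)⁻¹ • ((b * (((i:ℤ) - 2 + 1 : ℤ) : K)) • jE b u ((i:ℤ) - 2) P) := by
    rcases eq_or_lt_of_le hi with h1 | h1
    · rw [← h1]
      simp only [Mop]
      norm_num
    · have h2 : 1 ≤ i - 1 := by omega
      rw [Mop1_eq b u (i-1) h2 P, show (((i-1 : ℕ):ℤ) - 1) = (i:ℤ) - 2 from by omega,
        smul_comm]
      congr 2
      push_cast
      ring
  rw [hb2, ← smul_add]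
  rfl

/-- `[M_i(2), M_j(2)] = (i−j)·M_{i+j−2}(2)`. -/
theorem commutator_M2_M2 (b u : K) (i j : ℕ) (hi : 1 ≤ i) (hj : 1 ≤ j) :
    commOp (Mop b u 2 i) (Mop b u 2 j) = ((i : K) - (j : K)) • Mop b u 2 (i + j - 2) := by
  rcases eq_or_ne i j with rfl | hij
  · funext P
    simp [commOp]
  · funext P
    have hij2 : 1 ≤ i + j - 2 := by omega
    show Mop b u 2 i (Mop b u 2 j P) - Mop b u 2 j (Mop b u 2 i P)
      = ((i : K) - (j : K)) • Mop b u 2 (i + j - 2) P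
    rw [Mop2_eq b u j hj P, Mop2_eq b u i hi P,
      Mop2_eq b u i hi ((1 + b)⁻¹ • TT b u ((j:ℤ) - 2) P),
      Mop2_eq b u j hj ((1 + b)⁻¹ • TT b u ((i:ℤ) - 2) P),
      Mop2_eq b u (i + j - 2) hij2 P,
      TT_smul, TT_smul,
      show ((i + j - 2 : ℕ) : ℤ) - 2 = ((i:ℤ) - 2) + ((j:ℤ) - 2) from by omega,
      smul_smul, smul_smul, ← smul_sub,
      Tcomm b u ((i:ℤ) - 2) ((j:ℤ) - 2) (by omega) (by omega) P,
      smul_smul, smul_smul]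
    congr 1
    by_cases hc : (1 + b) = 0
    · rw [hc, inv_zero]
      ring
    · field_simp
      simp
end
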